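/- arXiv:2102.04929 — 2 statements merged into one kernel-verified Lean document; each statement's English description precedes it below -/
import Mathlib

section
/- In a serial-dictatorship matching where receivers are processed in a fixed order and each is matched to the most-preferred still-available donor on its eligibility list, the resulting matching is Pareto-optimal for receivers: no other matching makes some receiver strictly better off (with respect to its preference order) without making another receiver strictly worse off. -/
variable {D : Type} [DecidableEq D]

/-- Donors already used up after the first `i` receivers of the serial
dictatorship have been processed (receiver `i` picks the first donor on its
eligibility/preference list `P i` that is still available). -/
def sdUsed (P : ℕ → List D) : ℕ → Finset D
  | 0 => ∅
  | i + 1 =>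
      sdUsed P i ∪ ((P i).find? fun d => decide (d ∉ sdUsed P i)).toFinset

/-- The donor assigned to receiver `i` by serial dictatorship (if any). -/
def sdMatch (P : ℕ → List D) (i : ℕ) : Option D :=
  (P i).find? fun d => decide (d ∉ sdUsed P i)

/-- Rank of an outcome for a receiver with (strict) preference list `l`:
position in the list for a matched eligible donor; `l.length` (worst) for
being unmatched (or matched outside the list). Smaller rank = better. -/
def outcomeRank (l : List D) : Option D → ℕ
  | none => l.length
  | some d => l.idxOf d

lemma outcomeRank_none (l : List D) : outcomeRank l none = l.length := rfl

lemma outcomeRank_some (l : List D) (d : D) :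
    outcomeRank l (some d) = l.idxOf d := rfl

/-- If `d ∈ l` and the index of `d` is smaller than the rank of the result of
`l.find? p`, then `p d = false`. -/
lemma find?_first_aux (p : D → Bool) :
    ∀ (l : List D) (d : D), d ∈ l →
      l.idxOf d < outcomeRank l (l.find? p) → p d = false := by
  intro l
  induction l with
  | nil => intro d hd; simp at hd
  | cons a t ih =>
    intro d hd hlt
    by_cases hpa : p a = true
    · rw [List.find?_cons_of_pos hpa, outcomeRank_some,
        List.idxOf_cons_self] at hlt
      omega
    · have hpa' : p a = false := by simpa using hpa
      rw [List.find?_cons_of_neg (by simp [hpa'])] at hlt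
      by_cases hda : d = a
      · subst hda; exact hpa'
      · have hdt : d ∈ t := by
          rcases List.mem_cons.mp hd with h | h
          · exact absurd h hda
          · exact h
        have hidx : (a :: t).idxOf d = t.idxOf d + 1 :=
          List.idxOf_cons_ne _ (by simpa using Ne.symm hda)
        apply ih d hdt
        cases hfind : t.find? p with
        | none =>
          rw [hfind] at hlt
          rw [outcomeRank_none] at hlt ⊢
          rw [hidx] at hlt
          simp only [List.length_cons] at hlt
          omega
        | some d' =>
          rw [hfind] at hlt
          rw [outcomeRank_some] at hlt ⊢
          have hd't : d' ∈ t := List.mem_of_find?_eq_some hfind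
          have hpd' : p d' = true := List.find?_some hfind
          have hd'a : d' ≠ a := by
            intro h; rw [h, hpa'] at hpd'; exact Bool.false_ne_true hpd'
          have hidx' : (a :: t).idxOf d' = t.idxOf d' + 1 :=
            List.idxOf_cons_ne _ (by simpa using Ne.symm hd'a)
          rw [hidx, hidx'] at hlt
          omega

lemma mem_sdUsed_iff (P : ℕ → List D) :
    ∀ (i : ℕ) (d : D), d ∈ sdUsed P i ↔ ∃ j < i, sdMatch P j = some d := by
  intro i
  induction i with
  | zero => intro d; simp [sdUsed]
  | succ k ih =>
    intro d
    constructor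
    · intro h
      simp only [sdUsed, Finset.mem_union, Option.mem_toFinset] at h
      rcases h with h | h
      · obtain ⟨j, hj, hm⟩ := (ih d).mp h
        exact ⟨j, by omega, hm⟩
      · exact ⟨k, by omega, by simpa [sdMatch, Option.mem_def] using h⟩
    · rintro ⟨j, hj, hm⟩
      simp only [sdUsed, Finset.mem_union, Option.mem_toFinset]
      by_cases hjk : j = k
      · right; subst hjk; simpa [sdMatch, Option.mem_def] using hm
      · left; exact (ih d).mpr ⟨j, by omega, hm⟩

/-- The serial-dictatorship matching is Pareto-optimal for
receivers: no other matching `M'` (assigning distinct eligible donors) makes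
every receiver weakly better off and some receiver strictly better off. -/
theorem serial_dictatorship_pareto_optimal
    (n : ℕ) (P : ℕ → List D) (hnodup : ∀ i, (P i).Nodup)
    (M' : ℕ → Option D)
    (hinj : ∀ i j d, i < n → j < n → M' i = some d → M' j = some d → i = j)
    (helig : ∀ i d, i < n → M' i = some d → d ∈ P i) :
    ¬ ((∀ i < n, outcomeRank (P i) (M' i) ≤ outcomeRank (P i) (sdMatch P i)) ∧
       (∃ i < n, outcomeRank (P i) (M' i) < outcomeRank (P i) (sdMatch P i))) := by
  rintro ⟨hweak, hex⟩
  have hexd : ∃ i, i < n ∧ outcomeRank (P i) (M' i) < outcomeRank (P i) (sdMatch P i) := by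
    obtain ⟨i, hi, h⟩ := hex; exact ⟨i, hi, h⟩
  classical
  obtain ⟨hi0n, hi0s⟩ := Nat.find_spec hexd
  set i0 := Nat.find hexd with hi0def
  -- rank of sdMatch is at most the list length
  have hsdrank : ∀ j, outcomeRank (P j) (sdMatch P j) ≤ (P j).length := by
    intro j
    cases hm : sdMatch P j with
    | none => rw [outcomeRank_none]
    | some d =>
      have : d ∈ P j := List.mem_of_find?_eq_some hm
      rw [outcomeRank_some]
      exact le_of_lt (List.idxOf_lt_length_iff.mpr this)
  -- earlier receivers get exactly their sd-match under M'
  have hagree : ∀ j < i0, M' j = sdMatch P j := by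
    intro j hj
    have hjn : j < n := lt_trans hj hi0n
    have hle := hweak j hjn
    have hnlt := Nat.find_min hexd hj
    push_neg at hnlt
    have heq : outcomeRank (P j) (M' j) = outcomeRank (P j) (sdMatch P j) :=
      le_antisymm hle (hnlt hjn)
    cases hsd : sdMatch P j with
    | none =>
      cases hM : M' j with
      | none => rfl
      | some d =>
        exfalso
        have hd : d ∈ P j := helig j d hjn hM
        have hlen : (P j).idxOf d < (P j).length := List.idxOf_lt_length_iff.mpr hd
        rw [hsd, hM, outcomeRank_none, outcomeRank_some] at heq
        omega
    | some d =>
      have hd : d ∈ P j := List.mem_of_find?_eq_some hsd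
      cases hM : M' j with
      | none =>
        exfalso
        rw [hsd, hM, outcomeRank_none, outcomeRank_some] at heq
        have : (P j).idxOf d < (P j).length := List.idxOf_lt_length_iff.mpr hd
        omega
      | some d' =>
        have hd' : d' ∈ P j := helig j d' hjn hM
        rw [hsd, hM, outcomeRank_some, outcomeRank_some] at heq
        have : d' = d := (List.idxOf_inj hd').mp heq
        rw [this]
  -- at i0, M' assigns some donor d strictly better than sdMatch
  cases hM : M' i0 with
  | none =>
    rw [hM, outcomeRank_none] at hi0s
    exact absurd (hsdrank i0) (by omega)
  | some d =>
    have hd : d ∈ P i0 := helig i0 d hi0n hM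
    rw [hM, outcomeRank_some] at hi0s
    have hfalse : (decide (d ∉ sdUsed P i0)) = false := by
      apply find?_first_aux _ (P i0) d hd
      exact hi0s
    have hused : d ∈ sdUsed P i0 := by simpa using hfalse
    obtain ⟨j, hj, hjm⟩ := (mem_sdUsed_iff P i0 d).mp hused
    have hMj : M' j = some d := (hagree j hj).trans hjm
    have : j = i0 := hinj j i0 d (lt_trans hj hi0n) hi0n hMj hM
    omega
end

section
/- The serial-dictatorship matching mechanism is strategyproof for receivers: for any receiver, reporting a preference list other than its true preference list never yields an assigned donor that is strictly preferred (under the true preferences) to the donor assigned when reporting truthfully. -/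
variable {D : Type} [DecidableEq D]

lemma sdUsed_update_eq (P : ℕ → List D) (k : ℕ) (Q : List D) :
    ∀ i, i ≤ k → sdUsed (Function.update P k Q) i = sdUsed P i := by
  intro i
  induction i with
  | zero => intro _; rfl
  | succ i ih =>
      intro h
      have hik : i < k := h
      have h1 := ih (le_of_lt hik)
      simp [sdUsed, h1, Function.update_of_ne (Nat.ne_of_lt hik)]

lemma find?_indexOf_le (p : D → Bool) :
    ∀ (l : List D) (a : D), l.find? p = some a →
      ∀ b ∈ l, p b = true → l.idxOf a ≤ l.idxOf b := by
  intro l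
  induction l with
  | nil => intro a h; simp at h
  | cons c l ih =>
      intro a h b hb hpb
      by_cases hpc : p c = true
      · rw [List.find?_cons_of_pos hpc] at h
        cases h
        simp [List.idxOf_cons_self]
      · have hpc' : p c = false := by simpa using hpc
        rw [List.find?_cons_of_neg (by simp [hpc'])] at h
        have hac : a ≠ c := by
          intro e; subst e
          have := List.find?_some h; rw [hpc'] at this; exact absurd this (by simp)
        have hbc : b ≠ c := by
          intro e; subst e; rw [hpb] at hpc'; exact absurd hpc' (by simp)
        have hbl : b ∈ l := by
          rcases List.mem_cons.mp hb with h' | h'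
          · exact absurd h' hbc
          · exact h'
        rw [List.idxOf_cons_ne _ hac.symm, List.idxOf_cons_ne _ hbc.symm]
        exact Nat.succ_le_succ (ih a h b hbl hpb)

/-- Serial dictatorship is strategyproof for receivers: receiver
`k` reporting some list `Q` instead of its true list `P k` never obtains a
donor strictly preferred (under `P k`) to the one obtained by truth-telling. -/
theorem serial_dictatorship_strategyproof
    (P : ℕ → List D) (hnodup : ∀ i, (P i).Nodup)
    (k : ℕ) (Q : List D) (hQ : Q.Nodup) :
    ¬ outcomeRank (P k) (sdMatch (Function.update P k Q) k) <
        outcomeRank (P k) (sdMatch P k) := by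
  intro hlt
  have hU : sdUsed (Function.update P k Q) k = sdUsed P k :=
    sdUsed_update_eq P k Q k le_rfl
  have hMm : sdMatch (Function.update P k Q) k =
      Q.find? fun d => decide (d ∉ sdUsed P k) := by
    simp [sdMatch, hU, Function.update_self]
  cases hm : sdMatch (Function.update P k Q) k with
  | none =>
      rw [hm] at hlt
      have : outcomeRank (P k) (sdMatch P k) ≤ (P k).length := by
        cases h : sdMatch P k with
        | none => simp [outcomeRank]
        | some d => exact List.idxOf_le_length
      exact absurd hlt (by simpa [outcomeRank] using not_lt.mpr this)
  | some d =>
      rw [hm] at hlt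
      rw [hMm] at hm
      have hpd : (fun x => decide (x ∉ sdUsed P k)) d = true := List.find?_some (p := fun x => decide (x ∉ sdUsed P k)) hm
      by_cases hdP : d ∈ P k
      · cases ht : sdMatch P k with
        | none =>
            have := List.find?_eq_none.mp ht d hdP
            exact this hpd
        | some e =>
            have hle := find?_indexOf_le _ (P k) e ht d hdP hpd
            rw [ht] at hlt
            simp only [outcomeRank] at hlt
            omega
      · have : (P k).idxOf d = (P k).length := List.idxOf_eq_length_iff.mpr hdP
        have h2 : outcomeRank (P k) (sdMatch P k) ≤ (P k).length := by
          cases h : sdMatch P k with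
          | none => simp [outcomeRank]
          | some e => exact List.idxOf_le_length
        have h3 : outcomeRank (P k) (some d) = (P k).length := this
        omega
end
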